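/- For the orthogonal model with 0 ≤ β < 1, if (1/N) log Z_N(β) = log 2 + G_N(β) with G_N → G monotonically and G differentiable, then the Gibbs energy densities h_N converge in distribution to the constant -G'(β); in particular ⟨e^{-λ h_N}⟩ = Z_N(β + λ/N)/Z_N(β) = exp(λ G'_N(β*)) for some β* ∈ [β, β + λ/N], and this converges to e^{λ G'(β)} for every λ. -/

import Mathlib

open Finset Filter Topology Matrix

/-- The spin value associated to a Boolean configuration entry. -/
noncomputable def spin (b : Bool) : ℝ := if b then 1 else -1

/-- Hamiltonian of the orthogonal model: `H_N(σ) = -(1/2) Σ_{i,j} J_{ij} σ_i σ_j`. -/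
noncomputable def Ho (J : (N : ℕ) → Matrix (Fin N) (Fin N) ℝ) (N : ℕ)
    (σ : Fin N → Bool) : ℝ :=
  -(1 / 2) * ∑ i, ∑ j, J N i j * spin (σ i) * spin (σ j)

/-- Partition function of the orthogonal model. -/
noncomputable def Zo (J : (N : ℕ) → Matrix (Fin N) (Fin N) ℝ) (N : ℕ) (β : ℝ) : ℝ :=
  ∑ σ : Fin N → Bool, Real.exp (-β * Ho J N σ)

/-- Gibbs expectation of the orthogonal model. -/
noncomputable def gibbso (J : (N : ℕ) → Matrix (Fin N) (Fin N) ℝ) (N : ℕ) (β : ℝ)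
    (f : (Fin N → Bool) → ℝ) : ℝ :=
  (∑ σ : Fin N → Bool, f σ * Real.exp (-β * Ho J N σ)) / Zo J N β

/-- `G_N(β) := (1/N) log Z_N(β) - log 2` for the orthogonal model. -/
noncomputable def Go (J : (N : ℕ) → Matrix (Fin N) (Fin N) ℝ) (N : ℕ) (β : ℝ) : ℝ :=
  (1 / (N : ℝ)) * Real.log (Zo J N β) - Real.log 2


lemma spin_mul_self (b : Bool) : spin b * spin b = 1 := by cases b <;> simp [spin]
lemma spin_not (b : Bool) : spin (!b) = -spin b := by cases b <;> simp [spin]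
lemma spin_true : spin true = 1 := rfl
lemma spin_false : spin false = -1 := rfl
lemma spin_sq_le_one (b : Bool) : spin b ^ 2 ≤ 1 := by cases b <;> norm_num [spin]

section upd
variable {ι : Type*} [Fintype ι] [DecidableEq ι]

lemma sum_update_half (i : ι) (F : (ι → Bool) → ℝ) :
    ∑ σ : ι → Bool, F σ
      = (∑ σ : ι → Bool, (F (Function.update σ i true) + F (Function.update σ i false))) / 2 := by
  have hinv : Function.Involutive (fun σ : ι → Bool => Function.update σ i (!σ i)) := by
    intro σ
    funext j
    by_cases h : j = i <;> simp [Function.update_apply, h]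
  have hb : ∑ σ : ι → Bool, F (Function.update σ i (!σ i)) = ∑ σ : ι → Bool, F σ :=
    Fintype.sum_bijective _ hinv.bijective _ _ (fun σ => rfl)
  have key : ∑ σ : ι → Bool, (F (Function.update σ i true) + F (Function.update σ i false))
      = ∑ σ : ι → Bool, (F σ + F (Function.update σ i (!σ i))) := by
    refine Finset.sum_congr rfl fun σ _ => ?_
    cases hσ : σ i
    · have h1 : Function.update σ i false = σ := by
        rw [← hσ]; exact Function.update_eq_self i σ
      rw [h1]
      simp [add_comm]
    · have h1 : Function.update σ i true = σ := by
        rw [← hσ]; exact Function.update_eq_self i σ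
      rw [h1]
      simp
  rw [key, Finset.sum_add_distrib, hb]
  ring

lemma sum_spin_mul (i : ι) (F : (ι → Bool) → ℝ)
    (hF : ∀ σ b, F (Function.update σ i b) = F σ) :
    ∑ σ : ι → Bool, spin (σ i) * F σ = 0 := by
  rw [sum_update_half i (fun σ => spin (σ i) * F σ)]
  have : ∀ σ : ι → Bool,
      spin (Function.update σ i true i) * F (Function.update σ i true)
        + spin (Function.update σ i false i) * F (Function.update σ i false) = 0 := by
    intro σ
    rw [Function.update_self, Function.update_self, hF, hF, spin_true, spin_false]
    ring
  rw [Finset.sum_congr rfl fun σ _ => this σ]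
  simp

lemma sum_spin (i : ι) : ∑ σ : ι → Bool, spin (σ i) = 0 := by
  simpa using sum_spin_mul i (fun _ => 1) (fun _ _ => rfl)

lemma sum_spin_spin {i j : ι} (hij : i ≠ j) :
    ∑ σ : ι → Bool, spin (σ i) * spin (σ j) = 0 :=
  sum_spin_mul i (fun σ => spin (σ j))
    (fun σ b => by simp [Function.update_of_ne (Ne.symm hij)])

end upd

section Zg
variable {κ : Type*} [Fintype κ] [Nonempty κ]

noncomputable def Zg (x : κ → ℝ) (b : ℝ) : ℝ := ∑ k, Real.exp (b * x k)

lemma Zg_pos (x : κ → ℝ) (b : ℝ) : 0 < Zg x b :=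
  Finset.sum_pos (fun k _ => Real.exp_pos _) Finset.univ_nonempty

noncomputable def S1 (x : κ → ℝ) (b : ℝ) : ℝ := ∑ k, x k * Real.exp (b * x k)
noncomputable def S2 (x : κ → ℝ) (b : ℝ) : ℝ := ∑ k, x k ^ 2 * Real.exp (b * x k)

lemma hasDerivAt_Zg (x : κ → ℝ) (b : ℝ) : HasDerivAt (Zg x) (S1 x b) b := by
  have h : ∀ k : κ, HasDerivAt (fun b => Real.exp (b * x k)) (x k * Real.exp (b * x k)) b := by
    intro k
    have := ((hasDerivAt_id b).mul_const (x k)).exp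
    simpa [mul_comm] using this
  exact HasDerivAt.fun_sum (fun k _ => h k)

lemma hasDerivAt_S1 (x : κ → ℝ) (b : ℝ) : HasDerivAt (S1 x) (S2 x b) b := by
  have h : ∀ k : κ, HasDerivAt (fun b => x k * Real.exp (b * x k))
      (x k ^ 2 * Real.exp (b * x k)) b := by
    intro k
    have := (((hasDerivAt_id b).mul_const (x k)).exp).const_mul (x k)
    refine this.congr_deriv ?_
    simp [mul_comm]
    ring
  exact HasDerivAt.fun_sum (fun k _ => h k)

lemma hasDerivAt_log_Zg (x : κ → ℝ) (b : ℝ) :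
    HasDerivAt (fun b => Real.log (Zg x b)) (S1 x b / Zg x b) b :=
  (hasDerivAt_Zg x b).log (Zg_pos x b).ne'

lemma sq_S1_le (x : κ → ℝ) (b : ℝ) : S1 x b ^ 2 ≤ S2 x b * Zg x b := by
  have h := Finset.sum_mul_sq_le_sq_mul_sq Finset.univ
    (fun k => x k * Real.exp (b * x k / 2)) (fun k => Real.exp (b * x k / 2))
  calc S1 x b ^ 2
      = (∑ k, (x k * Real.exp (b * x k / 2)) * Real.exp (b * x k / 2)) ^ 2 := by
        congr 1; refine Finset.sum_congr rfl fun k _ => ?_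
        rw [mul_assoc, ← Real.exp_add]; ring_nf
    _ ≤ (∑ k, (x k * Real.exp (b * x k / 2)) ^ 2) * ∑ k, Real.exp (b * x k / 2) ^ 2 := h
    _ = S2 x b * Zg x b := by
        congr 1
        · refine Finset.sum_congr rfl fun k _ => ?_
          rw [mul_pow, sq (Real.exp _), ← Real.exp_add]; ring_nf
        · refine Finset.sum_congr rfl fun k _ => ?_
          rw [sq (Real.exp _), ← Real.exp_add]; ring_nf

lemma convexOn_log_Zg (x : κ → ℝ) : ConvexOn ℝ Set.univ (fun b => Real.log (Zg x b)) := by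
  have hderiv2 : ∀ b : ℝ, HasDerivAt (fun b => S1 x b / Zg x b)
      ((S2 x b * Zg x b - S1 x b * S1 x b) / Zg x b ^ 2) b := by
    intro b
    exact (hasDerivAt_S1 x b).div (hasDerivAt_Zg x b) (Zg_pos x b).ne'
  refine convexOn_of_hasDerivWithinAt2_nonneg convex_univ ?_
    (f' := fun b => S1 x b / Zg x b)
    (f'' := fun b => (S2 x b * Zg x b - S1 x b * S1 x b) / Zg x b ^ 2) ?_ ?_ ?_
  · exact fun b _ => ((hasDerivAt_log_Zg x b).continuousAt).continuousWithinAt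
  · intro b _
    exact (hasDerivAt_log_Zg x b).hasDerivWithinAt
  · intro b _
    exact (hderiv2 b).hasDerivWithinAt
  · intro b _
    apply div_nonneg _ (sq_nonneg _)
    have := sq_S1_le x b
    nlinarith [this]

end Zg

section GoFacts
variable (J : (N : ℕ) → Matrix (Fin N) (Fin N) ℝ)

lemma Zo_eq (N : ℕ) : Zo J N = Zg (fun σ : Fin N → Bool => -Ho J N σ) := by
  funext b
  refine Finset.sum_congr rfl fun σ _ => ?_
  rw [show -b * Ho J N σ = b * -Ho J N σ by ring]

lemma Zo_pos (N : ℕ) (b : ℝ) : 0 < Zo J N b := by rw [Zo_eq]; exact Zg_pos _ b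

lemma differentiable_Go (N : ℕ) : Differentiable ℝ (Go J N) := by
  intro b
  have h1 : HasDerivAt (fun b => Real.log (Zo J N b))
      (S1 (fun σ : Fin N → Bool => -Ho J N σ) b / Zg (fun σ : Fin N → Bool => -Ho J N σ) b) b := by
    rw [Zo_eq]; exact hasDerivAt_log_Zg _ b
  exact (((h1.const_mul (1 / (N:ℝ))).sub_const (Real.log 2)).differentiableAt)

lemma convexOn_Go (N : ℕ) : ConvexOn ℝ Set.univ (Go J N) := by
  have h := (convexOn_log_Zg (fun σ : Fin N → Bool => -Ho J N σ)).smul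
    (c := 1 / (N:ℝ)) (by positivity)
  have h2 := h.add (convexOn_const (-Real.log 2) convex_univ)
  refine h2.congr fun b _ => ?_
  simp [Go, Zo_eq, sub_eq_add_neg, smul_eq_mul]

lemma Go_zero (N : ℕ) (hN : 1 ≤ N) : Go J N 0 = 0 := by
  have hcard : (Fintype.card (Fin N → Bool) : ℝ) = 2 ^ N := by
    simp [Fintype.card_fun]
  have hZ : Zo J N 0 = 2 ^ N := by
    simp only [Zo, neg_zero, zero_mul, Real.exp_zero]
    rw [Finset.sum_const, Finset.card_univ, nsmul_eq_mul, mul_one, ← hcard]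
  have hN' : (N : ℝ) ≠ 0 := Nat.cast_ne_zero.2 (by omega)
  rw [Go, hZ, show ((2:ℝ)^N) = (2:ℝ)^(N:ℕ) from rfl, Real.log_pow]
  field_simp
  ring

lemma slope_two_sided {f : ℝ → ℝ} (hf : ConvexOn ℝ Set.univ f) {β ε h : ℝ}
    (hε : 0 < ε) (hh : h ≠ 0) (hle : |h| ≤ ε) :
    (f β - f (β - ε)) / ε ≤ (f (β + h) - f β) / h ∧
      (f (β + h) - f β) / h ≤ (f (β + ε) - f β) / ε := by
  have m := hf.slope_mono (Set.mem_univ β)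
  have habs := abs_le.1 hle
  have h1 : β - ε ∈ Set.univ \ {β} := ⟨trivial, by simp; intro hc; nlinarith [hc]⟩
  have h2 : β + h ∈ Set.univ \ {β} := ⟨trivial, by simp [hh]⟩
  have h3 : β + ε ∈ Set.univ \ {β} := ⟨trivial, by simp; nlinarith⟩
  have e1 : slope f β (β - ε) = (f β - f (β - ε)) / ε := by
    rw [slope_def_field, show β - ε - β = -ε by ring, div_neg, ← neg_div, neg_sub]
  have e2 : slope f β (β + h) = (f (β + h) - f β) / h := by
    rw [slope_def_field, show β + h - β = h by ring]
  have e3 : slope f β (β + ε) = (f (β + ε) - f β) / ε := by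
    rw [slope_def_field, show β + ε - β = ε by ring]
  constructor
  · rw [← e1, ← e2]; exact m h1 h2 (by nlinarith)
  · rw [← e2, ← e3]; exact m h2 h3 (by nlinarith)

end GoFacts

section Subg

variable (J : (N : ℕ) → Matrix (Fin N) (Fin N) ℝ) (N : ℕ)

/-- off-diagonal part of the coupling matrix -/
noncomputable def Bo (i j : Fin N) : ℝ := if i = j then 0 else J N i j

/-- the off-diagonal interaction -/
noncomputable def Wo (σ : Fin N → Bool) : ℝ :=
  ∑ i, ∑ j, Bo J N i j * spin (σ i) * spin (σ j)

/-- slope of `Go` at `0`, i.e. `tr J/(2N)` -/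
noncomputable def gN : ℝ := (∑ i, J N i i) / (2 * N)

/-- indicator of a boolean -/
noncomputable def xi (δ : Fin N → Bool) (i : Fin N) : ℝ := if δ i then 1 else 0

noncomputable def Mm (δ : Fin N → Bool) (σ : Fin N → Bool) (i : Fin N) : ℝ :=
  ∑ j, (1 - xi N δ j) * Bo J N i j * spin (σ j)

noncomputable def Dd (δ σ : Fin N → Bool) : ℝ :=
  ∑ i, xi N δ i * spin (σ i) * Mm J N δ σ i

lemma Jcol (hsymm : (J N).IsSymm) (horth : J N * (J N)ᵀ = 1) (j k : Fin N) :
    ∑ i, J N i j * J N i k = if j = k then 1 else 0 := by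
  have h := congrArg (fun M => M j k) horth
  simp only [Matrix.mul_apply, Matrix.transpose_apply, Matrix.one_apply] at h
  rw [← h]
  exact Finset.sum_congr rfl fun i _ => by
    rw [hsymm.apply j i, hsymm.apply k i]

lemma Jdiag_sq (hsymm : (J N).IsSymm) (horth : J N * (J N)ᵀ = 1) (i : Fin N) :
    (J N i i) ^ 2 ≤ 1 := by
  have h := Jcol J N hsymm horth i i
  simp only [if_pos rfl] at h
  calc (J N i i)^2 = J N i i * J N i i := sq (J N i i)
    _ ≤ ∑ k, J N k i * J N k i :=
        Finset.single_le_sum (f := fun k => J N k i * J N k i)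
          (fun k _ => mul_self_nonneg _) (Finset.mem_univ i)
    _ = 1 := h

lemma negHo_eq (σ : Fin N → Bool) :
    -Ho J N σ = (∑ i, J N i i) / 2 + Wo J N σ / 2 := by
  have key : ∑ i, ∑ j, J N i j * spin (σ i) * spin (σ j)
      = (∑ i, J N i i) + Wo J N σ := by
    rw [Wo, ← Finset.sum_add_distrib]
    refine Finset.sum_congr rfl fun i _ => ?_
    have step : ∀ j, J N i j * spin (σ i) * spin (σ j)
        = (if j = i then J N i i else 0) + Bo J N i j * spin (σ i) * spin (σ j) := by
      intro j
      by_cases h : i = j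
      · subst h
        have hB : Bo J N i i = 0 := if_pos rfl
        rw [if_pos rfl, hB, zero_mul, zero_mul, add_zero, mul_assoc, spin_mul_self, mul_one]
      · rw [if_neg (fun hh => h (Eq.symm hh))]
        simp only [Bo, if_neg h, zero_add]
    calc ∑ j, J N i j * spin (σ i) * spin (σ j)
        = ∑ j, ((if j = i then J N i i else 0) + Bo J N i j * spin (σ i) * spin (σ j)) :=
          Finset.sum_congr rfl fun j _ => step j
      _ = (∑ j, if j = i then J N i i else 0)
            + ∑ j, Bo J N i j * spin (σ i) * spin (σ j) := Finset.sum_add_distrib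
      _ = J N i i + ∑ j, Bo J N i j * spin (σ i) * spin (σ j) := by
          rw [Finset.sum_ite_eq' Finset.univ i (fun _ => J N i i),
            if_pos (Finset.mem_univ i)]
  rw [Ho, key]; ring

lemma Zo_factor (b : ℝ) :
    Zo J N b = Real.exp (b * (∑ i, J N i i) / 2) * ∑ σ : Fin N → Bool,
      Real.exp ((b / 2) * Wo J N σ) := by
  rw [Zo, Finset.mul_sum]
  refine Finset.sum_congr rfl fun σ _ => ?_
  rw [← Real.exp_add]
  congr 1
  rw [show -b * Ho J N σ = b * (-Ho J N σ) by ring, negHo_eq J N σ]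
  ring

lemma sum_Wo : ∑ σ : Fin N → Bool, Wo J N σ = 0 := by
  simp only [Wo]
  rw [Finset.sum_comm]
  refine Finset.sum_eq_zero fun i _ => ?_
  rw [Finset.sum_comm]
  refine Finset.sum_eq_zero fun j _ => ?_
  by_cases h : i = j
  · simp [Bo, h]
  · calc ∑ σ : Fin N → Bool, Bo J N i j * spin (σ i) * spin (σ j)
        = Bo J N i j * ∑ σ : Fin N → Bool, spin (σ i) * spin (σ j) := by
          rw [Finset.mul_sum]
          exact Finset.sum_congr rfl fun σ _ => by ring
      _ = 0 := by rw [sum_spin_spin h, mul_zero]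

end Subg

section Subg2
variable (J : (N : ℕ) → Matrix (Fin N) (Fin N) ℝ) (N : ℕ)

lemma xi_eq (δ : Fin N → Bool) (i : Fin N) : xi N δ i = (1 + spin (δ i)) / 2 := by
  cases h : δ i <;> simp [xi, h, spin]

lemma sum_xi {i j : Fin N} (hij : i ≠ j) :
    ∑ δ : Fin N → Bool, xi N δ i * (1 - xi N δ j) = 2 ^ N / 4 := by
  have key : ∀ δ : Fin N → Bool, xi N δ i * (1 - xi N δ j)
      = (1 + spin (δ i) - spin (δ j) - spin (δ i) * spin (δ j)) / 4 := by
    intro δ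
    rw [xi_eq, xi_eq]; ring
  rw [Finset.sum_congr rfl fun δ _ => key δ]
  have h1 : ∑ δ : Fin N → Bool,
      (1 + spin (δ i) - spin (δ j) - spin (δ i) * spin (δ j)) / 4
      = ((∑ δ : Fin N → Bool, (1:ℝ)) + (∑ δ : Fin N → Bool, spin (δ i))
        - (∑ δ : Fin N → Bool, spin (δ j))
        - (∑ δ : Fin N → Bool, spin (δ i) * spin (δ j))) / 4 := by
    rw [← Finset.sum_add_distrib, ← Finset.sum_sub_distrib, ← Finset.sum_sub_distrib]
    rw [Finset.sum_div]
  rw [h1, sum_spin, sum_spin, sum_spin_spin hij]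
  have hc : ∑ δ : Fin N → Bool, (1:ℝ) = 2 ^ N := by
    rw [Finset.sum_const, Finset.card_univ]
    simp [Fintype.card_fun]
  rw [hc]; ring

lemma sum_Dd (σ : Fin N → Bool) :
    ∑ δ : Fin N → Bool, Dd J N δ σ = 2 ^ N / 4 * Wo J N σ := by
  simp only [Dd, Mm]
  rw [Finset.sum_comm]
  have key : ∀ i : Fin N, ∑ δ : Fin N → Bool,
      xi N δ i * spin (σ i) * ∑ j, (1 - xi N δ j) * Bo J N i j * spin (σ j)
      = 2 ^ N / 4 * ∑ j, Bo J N i j * spin (σ i) * spin (σ j) := by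
    intro i
    have expand : ∀ δ : Fin N → Bool,
        xi N δ i * spin (σ i) * ∑ j, (1 - xi N δ j) * Bo J N i j * spin (σ j)
        = ∑ j, (xi N δ i * (1 - xi N δ j)) * (Bo J N i j * spin (σ i) * spin (σ j)) := by
      intro δ
      rw [Finset.mul_sum]
      exact Finset.sum_congr rfl fun j _ => by ring
    rw [Finset.sum_congr rfl fun δ _ => expand δ, Finset.sum_comm, Finset.mul_sum]
    refine Finset.sum_congr rfl fun j _ => ?_
    rw [← Finset.sum_mul]
    by_cases h : i = j
    · have : Bo J N i j = 0 := by simp [Bo, h]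
      rw [this]; ring_nf
    · rw [sum_xi N h]
  rw [Finset.sum_congr rfl fun i _ => key i, ← Finset.mul_sum, Wo]

/-- the key decoupling/peeling estimate -/
lemma peel {N : ℕ} (s : Finset (Fin N)) (m : Fin N → (Fin N → Bool) → ℝ)
    (r : (Fin N → Bool) → ℝ)
    (hm : ∀ i ∈ s, ∀ k ∈ s, ∀ σ b', m i (Function.update σ k b') = m i σ)
    (hr : ∀ k ∈ s, ∀ σ b', r (Function.update σ k b') = r σ) :
    ∑ σ : Fin N → Bool, Real.exp ((∑ i ∈ s, spin (σ i) * m i σ) + r σ)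
      ≤ ∑ σ : Fin N → Bool, Real.exp ((∑ i ∈ s, (m i σ) ^ 2 / 2) + r σ) := by
  induction s using Finset.induction generalizing r with
  | empty => simp
  | insert a s' ha ih =>
    have key := sum_update_half a (fun σ : Fin N → Bool =>
      Real.exp ((∑ i ∈ insert a s', spin (σ i) * m i σ) + r σ))
    have eval : ∀ (σ : Fin N → Bool) (b' : Bool),
        (∑ i ∈ insert a s', spin (Function.update σ a b' i) * m i (Function.update σ a b'))
          + r (Function.update σ a b')
        = spin b' * m a σ + ((∑ i ∈ s', spin (σ i) * m i σ) + r σ) := by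
      intro σ b'
      rw [Finset.sum_insert ha, Function.update_self,
        hm a (Finset.mem_insert_self a s') a (Finset.mem_insert_self a s'),
        hr a (Finset.mem_insert_self a s')]
      have hrest : ∑ i ∈ s', spin (Function.update σ a b' i) * m i (Function.update σ a b')
          = ∑ i ∈ s', spin (σ i) * m i σ := by
        refine Finset.sum_congr rfl fun i hi => ?_
        have hia : i ≠ a := fun hc => ha (hc ▸ hi)
        rw [Function.update_of_ne hia,
          hm i (Finset.mem_insert_of_mem hi) a (Finset.mem_insert_self a s')]
      rw [hrest]
      ring
    have bound : ∀ σ : Fin N → Bool,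
        Real.exp ((∑ i ∈ insert a s', spin (Function.update σ a true i)
            * m i (Function.update σ a true)) + r (Function.update σ a true))
          + Real.exp ((∑ i ∈ insert a s', spin (Function.update σ a false i)
            * m i (Function.update σ a false)) + r (Function.update σ a false))
        ≤ 2 * Real.exp ((∑ i ∈ s', spin (σ i) * m i σ)
            + (r σ + (m a σ) ^ 2 / 2)) := by
      intro σ
      rw [eval σ true, eval σ false, spin_true, spin_false]
      have hT := Real.exp_pos ((∑ i ∈ s', spin (σ i) * m i σ) + r σ)
      rw [Real.exp_add (1 * m a σ) _, Real.exp_add (-1 * m a σ) _,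
        show (∑ i ∈ s', spin (σ i) * m i σ) + (r σ + m a σ ^ 2 / 2)
          = m a σ ^ 2 / 2 + ((∑ i ∈ s', spin (σ i) * m i σ) + r σ) by ring,
        Real.exp_add (m a σ ^ 2 / 2) _]
      have hc := Real.cosh_le_exp_half_sq (m a σ)
      rw [Real.cosh_eq] at hc
      have h1 : Real.exp (1 * m a σ) = Real.exp (m a σ) := by norm_num
      have h2 : Real.exp (-1 * m a σ) = Real.exp (-m a σ) := by norm_num
      rw [h1, h2]
      nlinarith [hc, hT]
    calc ∑ σ : Fin N → Bool, Real.exp ((∑ i ∈ insert a s', spin (σ i) * m i σ) + r σ)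
        = (∑ σ : Fin N → Bool, (Real.exp ((∑ i ∈ insert a s',
            spin (Function.update σ a true i) * m i (Function.update σ a true))
              + r (Function.update σ a true))
          + Real.exp ((∑ i ∈ insert a s', spin (Function.update σ a false i)
              * m i (Function.update σ a false)) + r (Function.update σ a false)))) / 2 := key
      _ ≤ (∑ σ : Fin N → Bool, 2 * Real.exp ((∑ i ∈ s', spin (σ i) * m i σ)
            + (r σ + (m a σ) ^ 2 / 2))) / 2 := by
          have hs := Finset.sum_le_sum (fun σ (_ : σ ∈ Finset.univ) => bound σ)
          linarith [hs]
      _ = ∑ σ : Fin N → Bool, Real.exp ((∑ i ∈ s', spin (σ i) * m i σ)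
            + (r σ + (m a σ) ^ 2 / 2)) := by
          rw [← Finset.mul_sum]; ring
      _ ≤ ∑ σ : Fin N → Bool, Real.exp ((∑ i ∈ s', (m i σ) ^ 2 / 2)
            + (r σ + (m a σ) ^ 2 / 2)) := by
          apply ih
          · intro i hi k hk σ b'
            exact hm i (Finset.mem_insert_of_mem hi) k (Finset.mem_insert_of_mem hk) σ b'
          · intro k hk σ b'
            rw [hr k (Finset.mem_insert_of_mem hk),
              hm a (Finset.mem_insert_self a s') k (Finset.mem_insert_of_mem hk)]
      _ = ∑ σ : Fin N → Bool, Real.exp ((∑ i ∈ insert a s', (m i σ) ^ 2 / 2) + r σ) := by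
          refine Finset.sum_congr rfl fun σ _ => ?_
          rw [Finset.sum_insert ha]
          congr 1
          ring

end Subg2

section Subg3
variable (J : (N : ℕ) → Matrix (Fin N) (Fin N) ℝ) (N : ℕ)

lemma Mm_sq_bound (hsymm : (J N).IsSymm) (horth : J N * (J N)ᵀ = 1)
    (δ σ : Fin N → Bool) : ∑ i, (Mm J N δ σ i) ^ 2 ≤ 4 * N := by
  set y : Fin N → ℝ := fun j => (1 - xi N δ j) * spin (σ j) with hy
  have hMm : ∀ i, Mm J N δ σ i = (∑ j, J N i j * y j) - J N i i * y i := by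
    intro i
    have step : ∀ j, (1 - xi N δ j) * Bo J N i j * spin (σ j)
        = J N i j * y j - (if j = i then J N i i * y i else 0) := by
      intro j
      by_cases h : j = i
      · subst h
        rw [if_pos rfl]
        simp [Bo]
      · have hB : Bo J N i j = J N i j := if_neg (fun hc => h hc.symm)
        rw [if_neg h, hB, hy]; ring
    rw [Mm, Finset.sum_congr rfl fun j _ => step j, Finset.sum_sub_distrib,
      Finset.sum_ite_eq' Finset.univ i (fun _ => J N i i * y i), if_pos (Finset.mem_univ i)]
  have hysq : ∀ j, y j ^ 2 ≤ 1 := by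
    intro j
    cases h : δ j
    · have : y j = spin (σ j) := by simp [hy, xi, h]
      rw [this]; exact spin_sq_le_one _
    · have : y j = 0 := by simp [hy, xi, h]
      rw [this]; norm_num
  have hyN : ∑ j, y j ^ 2 ≤ (N : ℝ) := by
    calc ∑ j, y j ^ 2 ≤ ∑ _j : Fin N, (1:ℝ) := Finset.sum_le_sum fun j _ => hysq j
      _ = N := by simp
  have h1 : ∑ i, (∑ j, J N i j * y j) ^ 2 = ∑ j, y j ^ 2 := by
    have expand : ∀ i, (∑ j, J N i j * y j) ^ 2
        = ∑ j, ∑ k, (J N i j * y j) * (J N i k * y k) := by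
      intro i
      rw [sq, Finset.sum_mul_sum]
    rw [Finset.sum_congr rfl fun i _ => expand i]
    rw [Finset.sum_comm]
    have inner : ∀ j, ∑ i, ∑ k, (J N i j * y j) * (J N i k * y k) = y j ^ 2 := by
      intro j
      rw [Finset.sum_comm]
      have perk : ∀ k, ∑ i, (J N i j * y j) * (J N i k * y k)
          = (y j * y k) * ∑ i, J N i j * J N i k := by
        intro k
        rw [Finset.mul_sum]
        exact Finset.sum_congr rfl fun i _ => by ring
      rw [Finset.sum_congr rfl fun k _ => perk k]
      have perk2 : ∀ k : Fin N, (y j * y k) * (∑ i, J N i j * J N i k)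
          = if k = j then y j * y j else 0 := by
        intro k
        rw [Jcol J N hsymm horth j k]
        by_cases h : j = k
        · subst h; simp
        · rw [if_neg h, if_neg (fun hc => h hc.symm)]; ring
      rw [Finset.sum_congr rfl fun k _ => perk2 k,
        Finset.sum_ite_eq' Finset.univ j (fun _ => y j * y j), if_pos (Finset.mem_univ j), sq]
    rw [Finset.sum_congr rfl fun j _ => inner j]
  have h2 : ∑ i, (J N i i * y i) ^ 2 ≤ ∑ i, y i ^ 2 := by
    refine Finset.sum_le_sum fun i _ => ?_
    have := Jdiag_sq J N hsymm horth i
    have h0 : (0:ℝ) ≤ y i ^ 2 := sq_nonneg _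
    calc (J N i i * y i)^2 = (J N i i)^2 * y i ^2 := by ring
      _ ≤ 1 * y i ^ 2 := by nlinarith
      _ = y i ^ 2 := one_mul _
  calc ∑ i, (Mm J N δ σ i) ^ 2
      = ∑ i, ((∑ j, J N i j * y j) - J N i i * y i) ^ 2 :=
        Finset.sum_congr rfl fun i _ => by rw [hMm i]
    _ ≤ ∑ i, (2 * (∑ j, J N i j * y j) ^ 2 + 2 * (J N i i * y i) ^ 2) := by
        refine Finset.sum_le_sum fun i _ => ?_
        nlinarith [sq_nonneg ((∑ j, J N i j * y j) + J N i i * y i)]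
    _ = 2 * ∑ i, (∑ j, J N i j * y j) ^ 2 + 2 * ∑ i, (J N i i * y i) ^ 2 := by
        rw [Finset.sum_add_distrib, ← Finset.mul_sum, ← Finset.mul_sum]
    _ ≤ 2 * ∑ j, y j ^ 2 + 2 * ∑ i, y i ^ 2 := by
        rw [h1]
        have := hyN
        nlinarith [h2]
    _ ≤ 4 * N := by nlinarith [hyN]

lemma stepC (hsymm : (J N).IsSymm) (horth : J N * (J N)ᵀ = 1) (b : ℝ) (δ : Fin N → Bool) :
    ∑ σ : Fin N → Bool, Real.exp (2 * b * Dd J N δ σ)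
      ≤ 2 ^ N * Real.exp (8 * b ^ 2 * N) := by
  set s : Finset (Fin N) := Finset.univ.filter (fun i => δ i = true) with hs
  have hD : ∀ σ : Fin N → Bool, 2 * b * Dd J N δ σ
      = (∑ i ∈ s, spin (σ i) * (2 * b * Mm J N δ σ i)) + 0 := by
    intro σ
    rw [add_zero, hs, Finset.sum_filter, Dd, Finset.mul_sum]
    refine Finset.sum_congr rfl fun i _ => ?_
    cases h : δ i
    · simp [xi, h]
    · rw [if_pos rfl, show xi N δ i = 1 from by simp [xi, h]]
      ring
  have hMinv : ∀ i, ∀ k ∈ s, ∀ (σ : Fin N → Bool) (b' : Bool),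
      Mm J N δ (Function.update σ k b') i = Mm J N δ σ i := by
    intro i k hk σ b'
    have hδk : δ k = true := by simpa [hs] using hk
    refine Finset.sum_congr rfl fun j _ => ?_
    by_cases h : j = k
    · subst h
      rw [show (1 - xi N δ j) = 0 by simp [xi, hδk]]
      ring
    · rw [Function.update_of_ne h]
  have hpeel := peel s (fun i σ => 2 * b * Mm J N δ σ i) (fun _ => 0)
    (fun i _ k hk σ b' => by
      show 2 * b * Mm J N δ (Function.update σ k b') i = 2 * b * Mm J N δ σ i
      rw [hMinv i k hk σ b']) (fun _ _ _ _ => rfl)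
  calc ∑ σ : Fin N → Bool, Real.exp (2 * b * Dd J N δ σ)
      = ∑ σ : Fin N → Bool, Real.exp ((∑ i ∈ s, spin (σ i) * (2 * b * Mm J N δ σ i)) + 0) :=
        Finset.sum_congr rfl fun σ _ => by rw [← hD σ]
    _ ≤ ∑ σ : Fin N → Bool, Real.exp ((∑ i ∈ s, (2 * b * Mm J N δ σ i) ^ 2 / 2) + 0) := hpeel
    _ ≤ ∑ σ : Fin N → Bool, Real.exp (8 * b ^ 2 * N) := by
        refine Finset.sum_le_sum fun σ _ => ?_
        apply Real.exp_le_exp.2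
        rw [add_zero]
        have e1 : ∑ i ∈ s, (2 * b * Mm J N δ σ i) ^ 2 / 2
            = 2 * b ^ 2 * ∑ i ∈ s, (Mm J N δ σ i) ^ 2 := by
          rw [Finset.mul_sum]
          exact Finset.sum_congr rfl fun i _ => by ring
        rw [e1]
        have hsub : ∑ i ∈ s, (Mm J N δ σ i) ^ 2 ≤ ∑ i, (Mm J N δ σ i) ^ 2 :=
          Finset.sum_le_sum_of_subset_of_nonneg (Finset.filter_subset _ _)
            (fun i _ _ => sq_nonneg _)
        have hb := Mm_sq_bound J N hsymm horth δ σ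
        nlinarith [sq_nonneg b]
    _ = 2 ^ N * Real.exp (8 * b ^ 2 * N) := by
        rw [Finset.sum_const, Finset.card_univ, nsmul_eq_mul]
        congr 1
        simp [Fintype.card_fun]

lemma card_inv_sum_one :
    ∑ _δ : Fin N → Bool, ((2:ℝ) ^ N)⁻¹ = 1 := by
  rw [Finset.sum_const, Finset.card_univ, nsmul_eq_mul]
  have : (Fintype.card (Fin N → Bool) : ℝ) = 2 ^ N := by simp [Fintype.card_fun]
  rw [this, mul_inv_cancel₀ (by positivity)]

lemma sum_exp_W_le (hsymm : (J N).IsSymm) (horth : J N * (J N)ᵀ = 1) (b : ℝ) :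
    ∑ σ : Fin N → Bool, Real.exp ((b / 2) * Wo J N σ)
      ≤ 2 ^ N * Real.exp (8 * b ^ 2 * N) := by
  have hjensen : ∀ σ : Fin N → Bool, Real.exp ((b / 2) * Wo J N σ)
      ≤ ∑ δ : Fin N → Bool, ((2:ℝ) ^ N)⁻¹ * Real.exp (2 * b * Dd J N δ σ) := by
    intro σ
    have h := convexOn_exp.map_sum_le (t := Finset.univ)
      (w := fun _ : Fin N → Bool => ((2:ℝ) ^ N)⁻¹)
      (p := fun δ : Fin N → Bool => 2 * b * Dd J N δ σ)
      (fun _ _ => by positivity) (card_inv_sum_one N) (fun _ _ => Set.mem_univ _)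
    have harg : ∑ δ : Fin N → Bool, ((2:ℝ) ^ N)⁻¹ • (2 * b * Dd J N δ σ)
        = (b / 2) * Wo J N σ := by
      simp only [smul_eq_mul]
      rw [show ∀ f : (Fin N → Bool) → ℝ, ∑ δ, ((2:ℝ)^N)⁻¹ * (2 * b * f δ)
          = ((2:ℝ)^N)⁻¹ * (2 * b) * ∑ δ, f δ from fun f => by
        rw [Finset.mul_sum]; exact Finset.sum_congr rfl fun δ _ => by ring]
      rw [sum_Dd J N σ]
      field_simp
      ring
    rw [harg] at h
    simpa [smul_eq_mul] using h
  calc ∑ σ : Fin N → Bool, Real.exp ((b / 2) * Wo J N σ)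
      ≤ ∑ σ : Fin N → Bool, ∑ δ : Fin N → Bool,
          ((2:ℝ) ^ N)⁻¹ * Real.exp (2 * b * Dd J N δ σ) :=
        Finset.sum_le_sum fun σ _ => hjensen σ
    _ = ∑ δ : Fin N → Bool, ((2:ℝ) ^ N)⁻¹ * ∑ σ : Fin N → Bool,
          Real.exp (2 * b * Dd J N δ σ) := by
        rw [Finset.sum_comm]
        exact Finset.sum_congr rfl fun δ _ => by rw [Finset.mul_sum]
    _ ≤ ∑ _δ : Fin N → Bool, ((2:ℝ) ^ N)⁻¹ * (2 ^ N * Real.exp (8 * b ^ 2 * N)) := by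
        refine Finset.sum_le_sum fun δ _ => ?_
        exact mul_le_mul_of_nonneg_left (stepC J N hsymm horth b δ) (by positivity)
    _ = 2 ^ N * Real.exp (8 * b ^ 2 * N) := by
        rw [← Finset.sum_mul, card_inv_sum_one N, one_mul]

lemma sum_exp_W_ge (b : ℝ) :
    (2:ℝ) ^ N ≤ ∑ σ : Fin N → Bool, Real.exp ((b / 2) * Wo J N σ) := by
  have h := convexOn_exp.map_sum_le (t := Finset.univ)
    (w := fun _ : Fin N → Bool => ((2:ℝ) ^ N)⁻¹)
    (p := fun σ : Fin N → Bool => (b / 2) * Wo J N σ)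
    (fun _ _ => by positivity) (card_inv_sum_one N) (fun _ _ => Set.mem_univ _)
  have harg : ∑ σ : Fin N → Bool, ((2:ℝ) ^ N)⁻¹ • ((b / 2) * Wo J N σ) = 0 := by
    simp only [smul_eq_mul]
    rw [show ∀ f : (Fin N → Bool) → ℝ, ∑ σ, ((2:ℝ)^N)⁻¹ * ((b/2) * f σ)
        = ((2:ℝ)^N)⁻¹ * (b/2) * ∑ σ, f σ from fun f => by
      rw [Finset.mul_sum]; exact Finset.sum_congr rfl fun σ _ => by ring]
    rw [sum_Wo, mul_zero]
  rw [harg, Real.exp_zero] at h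
  have h2 : ∑ σ : Fin N → Bool, ((2:ℝ) ^ N)⁻¹ • Real.exp ((b / 2) * Wo J N σ)
      = ((2:ℝ) ^ N)⁻¹ * ∑ σ : Fin N → Bool, Real.exp ((b / 2) * Wo J N σ) := by
    simp only [smul_eq_mul]
    rw [Finset.mul_sum]
  rw [h2] at h
  have hpos : (0:ℝ) < 2 ^ N := by positivity
  calc (2:ℝ) ^ N = 2 ^ N * 1 := (mul_one _).symm
    _ ≤ 2 ^ N * (((2:ℝ) ^ N)⁻¹ * ∑ σ : Fin N → Bool, Real.exp ((b / 2) * Wo J N σ)) :=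
        mul_le_mul_of_nonneg_left h (le_of_lt hpos)
    _ = ∑ σ : Fin N → Bool, Real.exp ((b / 2) * Wo J N σ) := by
        rw [← mul_assoc, mul_inv_cancel₀ hpos.ne', one_mul]

lemma sub_gauss (hsymm : (J N).IsSymm) (horth : J N * (J N)ᵀ = 1) (hN : 1 ≤ N) (b : ℝ) :
    b * gN J N ≤ Go J N b ∧ Go J N b ≤ b * gN J N + 8 * b ^ 2 := by
  have hNR : (0:ℝ) < N := by exact_mod_cast Nat.pos_of_ne_zero (by omega)
  set S := ∑ σ : Fin N → Bool, Real.exp ((b / 2) * Wo J N σ) with hSdef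
  have hSpos : 0 < S := Finset.sum_pos (fun _ _ => Real.exp_pos _) Finset.univ_nonempty
  have hlogZo : Real.log (Zo J N b) = b * (∑ i, J N i i) / 2 + Real.log S := by
    rw [Zo_factor, Real.log_mul (Real.exp_pos _).ne' hSpos.ne', Real.log_exp]
  have hGo : Go J N b = b * gN J N + (1 / N) * (Real.log S - N * Real.log 2) := by
    rw [Go, hlogZo, gN]
    field_simp
    ring
  have hlow : (N:ℝ) * Real.log 2 ≤ Real.log S := by
    have := Real.log_le_log (by positivity) (sum_exp_W_ge J N b)
    rw [Real.log_pow] at this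
    exact_mod_cast this
  have hup : Real.log S ≤ (N:ℝ) * Real.log 2 + 8 * b ^ 2 * N := by
    have := Real.log_le_log hSpos (sum_exp_W_le J N hsymm horth b)
    rw [Real.log_mul (by positivity) (Real.exp_pos _).ne', Real.log_pow, Real.log_exp] at this
    exact_mod_cast this
  constructor
  · rw [hGo]
    have : 0 ≤ (1 / (N:ℝ)) * (Real.log S - N * Real.log 2) := by
      apply mul_nonneg (by positivity)
      linarith
    linarith
  · rw [hGo]
    have : (1 / (N:ℝ)) * (Real.log S - N * Real.log 2) ≤ 8 * b ^ 2 := by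
      rw [div_mul_eq_mul_div, one_mul, div_le_iff₀ hNR]
      nlinarith [hup]
    linarith

end Subg3

lemma slope_control {G : ℝ → ℝ} {β : ℝ} (hd : DifferentiableAt ℝ G β) :
    ∀ ε > 0, ∃ η > 0, ∀ h : ℝ, h ≠ 0 → |h| < η →
      |(G (β + h) - G β) / h - deriv G β| < ε := by
  have hda := hd.hasDerivAt
  rw [hasDerivAt_iff_tendsto_slope] at hda
  rw [Metric.tendsto_nhdsWithin_nhds] at hda
  intro ε hε
  obtain ⟨η, hη, hh⟩ := hda ε hε
  refine ⟨η, hη, fun h h0 hlt => ?_⟩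
  have hmem : β + h ∈ ({β}ᶜ : Set ℝ) := by
    simp only [Set.mem_compl_iff, Set.mem_singleton_iff]
    intro hc; exact h0 (by linarith)
  have hdist : dist (β + h) β < η := by
    rw [Real.dist_eq, show β + h - β = h by ring]; exact hlt
  have := hh hmem hdist
  rw [Real.dist_eq, slope_def_field, show β + h - β = h by ring] at this
  exact this

lemma arith8 {lam ε n : ℝ} (hε : 0 < ε) (hn : 0 < n) (h : 16 * lam ^ 2 < n * ε) :
    8 * lam ^ 2 / n < ε / 2 := by
  rw [div_lt_iff₀ hn]; nlinarith

set_option maxHeartbeats 1000000 in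
lemma key_limit (J : (N : ℕ) → Matrix (Fin N) (Fin N) ℝ)
    (hsymm : ∀ N, (J N).IsSymm) (horth : ∀ N, J N * (J N)ᵀ = 1)
    (β : ℝ) (h0 : 0 ≤ β) (h1 : β < 1) (G : ℝ → ℝ)
    (hlim : ∀ b : ℝ, 0 ≤ b → b < 1 →
      Tendsto (fun N : ℕ => Go J N b) atTop (𝓝 (G b)))
    (hdiff : ∀ b ∈ Set.Ico (0 : ℝ) 1, DifferentiableAt ℝ G b) (lam : ℝ) :
    Tendsto (fun N : ℕ => (N : ℝ) * (Go J N (β + lam / N) - Go J N β)) atTop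
      (𝓝 (lam * deriv G β)) := by
  by_cases hlam : lam = 0
  · subst hlam
    have : (fun N : ℕ => (N : ℝ) * (Go J N (β + 0 / N) - Go J N β)) = fun _ => 0 := by
      funext N; simp
    rw [this, zero_mul]
    exact tendsto_const_nhds
  set c := deriv G β with hc
  rw [Metric.tendsto_atTop]
  intro ε hε
  have hlampos : 0 < |lam| := abs_pos.2 hlam
  set ε1 := ε / (2 * (|lam| + 1)) with hε1
  have hε1pos : 0 < ε1 := by positivity
  have hε1half : |lam| * ε1 < ε / 2 := by
    have h2 : (|lam| + 1) * ε1 = ε / 2 := by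
      rw [hε1]
      field_simp
    nlinarith [hε1pos]
  rcases eq_or_lt_of_le h0 with hβ0 | hβpos
  · -- case β = 0
    subst hβ0
    have hG0 : G 0 = 0 := by
      have h2 : Tendsto (fun N : ℕ => Go J N 0) atTop (𝓝 0) := by
        refine Tendsto.congr' ?_ (tendsto_const_nhds (x := (0:ℝ)) (f := atTop))
        filter_upwards [eventually_ge_atTop 1] with N hN
        exact (Go_zero J N hN).symm
      exact tendsto_nhds_unique (hlim 0 le_rfl one_pos) h2
    have hd0 := hdiff 0 ⟨le_rfl, one_pos⟩
    obtain ⟨η, hηpos, hslope⟩ := slope_control hd0 (ε1 / 2) (by positivity)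
    set ε0 := min (η / 2) (min (ε1 / 32) (1 / 2)) with hε0def
    have hε0pos : 0 < ε0 :=
      lt_min (by linarith) (lt_min (by positivity) (by norm_num))
    have hε0η : ε0 < η := lt_of_le_of_lt (min_le_left _ _) (by linarith)
    have hε0small : 8 * ε0 ≤ ε1 / 4 := by
      have : ε0 ≤ ε1 / 32 := le_trans (min_le_right _ _) (min_le_left _ _)
      linarith
    have hε0lt1 : ε0 < 1 := by
      have : ε0 ≤ 1 / 2 := le_trans (min_le_right _ _) (min_le_right _ _)
      linarith
    have hsl : |G ε0 / ε0 - c| < ε1 / 2 := by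
      have h3 := hslope ε0 (ne_of_gt hε0pos) (by rw [abs_of_pos hε0pos]; exact hε0η)
      rw [zero_add, hG0, sub_zero] at h3
      exact h3
    have hconv := hlim ε0 (le_of_lt hε0pos) hε0lt1
    rw [Metric.tendsto_atTop] at hconv
    obtain ⟨N1, hN1⟩ := hconv (ε1 / 4 * ε0) (by positivity)
    obtain ⟨N2, hN2⟩ := exists_nat_gt (16 * lam ^ 2 / ε)
    refine ⟨max (max N1 N2) 1, fun n hn => ?_⟩
    have hn1 : 1 ≤ n := le_trans (le_max_right _ _) hn
    have hnN1 : N1 ≤ n := le_trans (le_trans (le_max_left _ _) (le_max_left _ _)) hn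
    have hnN2 : N2 ≤ n := le_trans (le_trans (le_max_right _ _) (le_max_left _ _)) hn
    have hnpos : (0:ℝ) < n := by exact_mod_cast Nat.pos_of_ne_zero (by omega)
    have hsg := sub_gauss J n (hsymm n) (horth n) hn1
    obtain ⟨hl, hu⟩ := hsg ε0
    have hgNbound : |gN J n - Go J n ε0 / ε0| ≤ 8 * ε0 := by
      have d1 : gN J n ≤ Go J n ε0 / ε0 := by
        rw [le_div_iff₀ hε0pos]; nlinarith
      have d2 : Go J n ε0 / ε0 ≤ gN J n + 8 * ε0 := by
        rw [div_le_iff₀ hε0pos]; nlinarith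
      rw [abs_le]; constructor <;> linarith
    have hGoG : |Go J n ε0 - G ε0| < ε1 / 4 * ε0 := by
      have := hN1 n hnN1; rwa [Real.dist_eq] at this
    have hGoGdiv : |Go J n ε0 / ε0 - G ε0 / ε0| < ε1 / 4 := by
      rw [div_sub_div_same, abs_div, abs_of_pos hε0pos, div_lt_iff₀ hε0pos]
      exact hGoG
    have hgNc : |gN J n - c| < ε1 := by
      have t1 := abs_sub_le (gN J n) (Go J n ε0 / ε0) c
      have t2 := abs_sub_le (Go J n ε0 / ε0) (G ε0 / ε0) c
      linarith
    obtain ⟨hbl, hbu⟩ := hsg (lam / n)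
    have hA : lam * gN J n ≤ (n:ℝ) * Go J n (lam / n) := by
      have := mul_le_mul_of_nonneg_left hbl (le_of_lt hnpos)
      have heq : (n:ℝ) * (lam / n * gN J n) = lam * gN J n := by
        field_simp
      linarith [heq ▸ this]
    have hB : (n:ℝ) * Go J n (lam / n) ≤ lam * gN J n + 8 * lam ^ 2 / n := by
      have := mul_le_mul_of_nonneg_left hbu (le_of_lt hnpos)
      have heq : (n:ℝ) * (lam / n * gN J n + 8 * (lam / n) ^ 2)
          = lam * gN J n + 8 * lam ^ 2 / n := by
        field_simp
      linarith [heq ▸ this]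
    have h8 : 8 * lam ^ 2 / n < ε / 2 := by
      have hn2' : 16 * lam ^ 2 / ε < (n:ℝ) :=
        lt_of_lt_of_le hN2 (Nat.cast_le.2 hnN2)
      exact arith8 hε hnpos ((div_lt_iff₀ hε).1 hn2')
    have ha : (n:ℝ) * (Go J n (0 + lam / n) - Go J n 0) = (n:ℝ) * Go J n (lam / n) := by
      rw [Go_zero J n hn1, zero_add, sub_zero]
    rw [Real.dist_eq, ha]
    have t1 := abs_sub_le ((n:ℝ) * Go J n (lam / n)) (lam * gN J n) (lam * c)
    have t2 : |(n:ℝ) * Go J n (lam / n) - lam * gN J n| ≤ 8 * lam ^ 2 / n := by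
      rw [abs_le]
      constructor
      · have : (0:ℝ) ≤ 8 * lam ^ 2 / n := by positivity
        linarith
      · linarith
    have t3 : |lam * gN J n - lam * c| < |lam| * ε1 := by
      rw [← mul_sub, abs_mul]
      exact mul_lt_mul_of_pos_left hgNc hlampos
    linarith
  · -- case 0 < β
    have hd := hdiff β ⟨h0, h1⟩
    obtain ⟨η, hηpos, hslope⟩ := slope_control hd (ε1 / 2) (by positivity)
    set ε0 := min (η / 2) (min (β / 2) ((1 - β) / 2)) with hε0def
    have hε0pos : 0 < ε0 :=
      lt_min (by linarith) (lt_min (by linarith) (by linarith))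
    have hε0η : ε0 < η := lt_of_le_of_lt (min_le_left _ _) (by linarith)
    have hε0β : ε0 ≤ β / 2 := le_trans (min_le_right _ _) (min_le_left _ _)
    have hε0b : ε0 ≤ (1 - β) / 2 := le_trans (min_le_right _ _) (min_le_right _ _)
    have hsplus : |(G (β + ε0) - G β) / ε0 - c| < ε1 / 2 :=
      hslope ε0 (ne_of_gt hε0pos) (by rw [abs_of_pos hε0pos]; exact hε0η)
    have hsminus : |(G β - G (β - ε0)) / ε0 - c| < ε1 / 2 := by
      have h3 := hslope (-ε0) (neg_ne_zero.2 (ne_of_gt hε0pos))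
        (by rw [abs_neg, abs_of_pos hε0pos]; exact hε0η)
      rw [show β + -ε0 = β - ε0 by ring] at h3
      rw [show (G (β - ε0) - G β) / -ε0 = (G β - G (β - ε0)) / ε0 by
        rw [div_neg, ← neg_div, neg_sub]] at h3
      exact h3
    have hcm := hlim (β - ε0) (by linarith) (by linarith)
    have hcb := hlim β h0 h1
    have hcp := hlim (β + ε0) (by linarith) (by linarith)
    rw [Metric.tendsto_atTop] at hcm hcb hcp
    obtain ⟨N1a, hN1a⟩ := hcm (ε1 / 8 * ε0) (by positivity)
    obtain ⟨N1b, hN1b⟩ := hcb (ε1 / 8 * ε0) (by positivity)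
    obtain ⟨N1c, hN1c⟩ := hcp (ε1 / 8 * ε0) (by positivity)
    obtain ⟨N2, hN2⟩ := exists_nat_gt (|lam| / ε0)
    refine ⟨max (max N1a (max N1b N1c)) (max N2 1), fun n hn => ?_⟩
    have hn1 : 1 ≤ n := le_trans (le_trans (le_max_right _ _) (le_max_right _ _)) hn
    have hnN1a : N1a ≤ n := le_trans (le_trans (le_max_left _ _) (le_max_left _ _)) hn
    have hnN1b : N1b ≤ n :=
      le_trans (le_trans (le_trans (le_max_left _ _) (le_max_right _ _)) (le_max_left _ _)) hn
    have hnN1c : N1c ≤ n :=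
      le_trans (le_trans (le_trans (le_max_right _ _) (le_max_right _ _)) (le_max_left _ _)) hn
    have hnN2 : N2 ≤ n := le_trans (le_trans (le_max_left _ _) (le_max_right _ _)) hn
    have hnpos : (0:ℝ) < n := by exact_mod_cast Nat.pos_of_ne_zero (by omega)
    have hda : |Go J n (β - ε0) - G (β - ε0)| < ε1 / 8 * ε0 := by
      have := hN1a n hnN1a; rwa [Real.dist_eq] at this
    have hdb : |Go J n β - G β| < ε1 / 8 * ε0 := by
      have := hN1b n hnN1b; rwa [Real.dist_eq] at this
    have hdc : |Go J n (β + ε0) - G (β + ε0)| < ε1 / 8 * ε0 := by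
      have := hN1c n hnN1c; rwa [Real.dist_eq] at this
    have hlamn : lam / n ≠ 0 := div_ne_zero hlam (ne_of_gt hnpos)
    have hlamabs : |lam / (n:ℝ)| ≤ ε0 := by
      have h4 : |lam| / ε0 < (n:ℝ) := lt_of_lt_of_le hN2 (Nat.cast_le.2 hnN2)
      rw [div_lt_iff₀ hε0pos] at h4
      rw [abs_div, Nat.abs_cast, div_le_iff₀ hnpos]
      nlinarith
    have hst := slope_two_sided (convexOn_Go J n) (β := β) hε0pos hlamn hlamabs
    set Sn := (Go J n (β + lam / n) - Go J n β) / (lam / n) with hSn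
    have hsm2 : |(Go J n β - Go J n (β - ε0)) / ε0 - (G β - G (β - ε0)) / ε0| < ε1 / 4 := by
      rw [div_sub_div_same, abs_div, abs_of_pos hε0pos, div_lt_iff₀ hε0pos]
      have := abs_sub_le (Go J n β - Go J n (β - ε0)) (G β - Go J n (β - ε0)) (G β - G (β - ε0))
      have e1 : |Go J n β - Go J n (β - ε0) - (G β - Go J n (β - ε0))| = |Go J n β - G β| := by
        congr 1; ring
      have e2 : |G β - Go J n (β - ε0) - (G β - G (β - ε0))| = |G (β - ε0) - Go J n (β - ε0)| := by
        congr 1; ring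
      rw [e1, e2] at this
      rw [abs_sub_comm (G (β - ε0))] at this
      calc |Go J n β - Go J n (β - ε0) - (G β - G (β - ε0))|
          ≤ |Go J n β - G β| + |Go J n (β - ε0) - G (β - ε0)| := this
        _ < ε1 / 8 * ε0 + ε1 / 8 * ε0 := by exact add_lt_add hdb hda
        _ = ε1 / 4 * ε0 := by ring
    have hsp2 : |(Go J n (β + ε0) - Go J n β) / ε0 - (G (β + ε0) - G β) / ε0| < ε1 / 4 := by
      rw [div_sub_div_same, abs_div, abs_of_pos hε0pos, div_lt_iff₀ hε0pos]
      have := abs_sub_le (Go J n (β + ε0) - Go J n β) (G (β + ε0) - Go J n β)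
        (G (β + ε0) - G β)
      have e1 : |Go J n (β + ε0) - Go J n β - (G (β + ε0) - Go J n β)|
          = |Go J n (β + ε0) - G (β + ε0)| := by congr 1; ring
      have e2 : |G (β + ε0) - Go J n β - (G (β + ε0) - G β)| = |G β - Go J n β| := by
        congr 1; ring
      rw [e1, e2] at this
      rw [abs_sub_comm (G β)] at this
      calc |Go J n (β + ε0) - Go J n β - (G (β + ε0) - G β)|
          ≤ |Go J n (β + ε0) - G (β + ε0)| + |Go J n β - G β| := this
        _ < ε1 / 8 * ε0 + ε1 / 8 * ε0 := add_lt_add hdc hdb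
        _ = ε1 / 4 * ε0 := by ring
    have hSlow : c - ε1 < Sn := by
      have b1 := hst.1
      have b2 := abs_lt.1 hsminus
      have b3 := abs_lt.1 hsm2
      linarith
    have hShigh : Sn < c + ε1 := by
      have b1 := hst.2
      have b2 := abs_lt.1 hsplus
      have b3 := abs_lt.1 hsp2
      linarith
    have heq : (n:ℝ) * (Go J n (β + lam / n) - Go J n β) = lam * Sn := by
      rw [hSn]
      field_simp
    rw [Real.dist_eq, heq, ← mul_sub, abs_mul]
    have hSc : |Sn - c| < ε1 := abs_lt.2 ⟨by linarith, by linarith⟩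
    calc |lam| * |Sn - c| < |lam| * ε1 := mul_lt_mul_of_pos_left hSc hlampos
      _ < ε / 2 := hε1half
      _ < ε := by linarith

section GibbsoLemmas
variable (J : (N : ℕ) → Matrix (Fin N) (Fin N) ℝ) (N : ℕ) (β : ℝ)

lemma gibbso_const (d : ℝ) : gibbso J N β (fun _ => d) = d := by
  rw [gibbso, ← Finset.mul_sum, show (∑ σ : Fin N → Bool, Real.exp (-β * Ho J N σ)) = Zo J N β
    from rfl, mul_div_assoc, div_self (Zo_pos J N β).ne', mul_one]

lemma gibbso_mono {f g : (Fin N → Bool) → ℝ} (h : ∀ σ, f σ ≤ g σ) :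
    gibbso J N β f ≤ gibbso J N β g := by
  apply div_le_div_of_nonneg_right _ (Zo_pos J N β).le
  exact Finset.sum_le_sum fun σ _ =>
    mul_le_mul_of_nonneg_right (h σ) (Real.exp_pos _).le

lemma gibbso_nonneg {f : (Fin N → Bool) → ℝ} (h : ∀ σ, 0 ≤ f σ) :
    0 ≤ gibbso J N β f :=
  div_nonneg (Finset.sum_nonneg fun σ _ => mul_nonneg (h σ) (Real.exp_pos _).le)
    (Zo_pos J N β).le

lemma gibbso_smul (d : ℝ) (f : (Fin N → Bool) → ℝ) :
    gibbso J N β (fun σ => d * f σ) = d * gibbso J N β f := by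
  rw [gibbso, gibbso, ← mul_div_assoc, Finset.mul_sum]
  congr 1
  exact Finset.sum_congr rfl fun σ _ => by ring

lemma gibbso_one_sub (f : (Fin N → Bool) → ℝ) :
    gibbso J N β (fun σ => 1 - f σ) = 1 - gibbso J N β f := by
  have h1 : gibbso J N β (fun σ => 1 - f σ) + gibbso J N β f = 1 := by
    rw [gibbso, gibbso, ← add_div, ← Finset.sum_add_distrib]
    rw [show (∑ σ : Fin N → Bool, ((1 - f σ) * Real.exp (-β * Ho J N σ)
        + f σ * Real.exp (-β * Ho J N σ)))
      = ∑ σ : Fin N → Bool, Real.exp (-β * Ho J N σ) from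
      Finset.sum_congr rfl fun σ _ => by ring]
    exact div_self (Zo_pos J N β).ne'
  linarith

lemma part1_eq (lam : ℝ) (hN : 1 ≤ N) :
    gibbso J N β (fun σ => Real.exp (-lam * (Ho J N σ / N)))
      = Zo J N (β + lam / N) / Zo J N β := by
  rw [gibbso]
  congr 1
  rw [Zo]
  refine Finset.sum_congr rfl fun σ _ => ?_
  rw [← Real.exp_add]
  congr 1
  have hN' : (N:ℝ) ≠ 0 := Nat.cast_ne_zero.2 (by omega)
  field_simp
  ring

lemma exp_NGo (lam : ℝ) (hN : 1 ≤ N) :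
    Real.exp ((N:ℝ) * (Go J N (β + lam / N) - Go J N β))
      = Zo J N (β + lam / N) / Zo J N β := by
  have hN' : (N:ℝ) ≠ 0 := Nat.cast_ne_zero.2 (by omega)
  have h1 : (N:ℝ) * (Go J N (β + lam / N) - Go J N β)
      = Real.log (Zo J N (β + lam / N)) - Real.log (Zo J N β) := by
    rw [Go, Go]
    field_simp
    ring
  rw [h1, Real.exp_sub, Real.exp_log (Zo_pos J N _), Real.exp_log (Zo_pos J N _)]

end GibbsoLemmas

/-- For the orthogonal model with `0 ≤ β < 1`: the Laplace transform identity
`⟨e^{-λ h_N}⟩ = Z_N(β+λ/N)/Z_N(β) = exp(λ G'_N(β*))` for some `β* ∈ [β, β+λ/N]`;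
this converges to `e^{λ G'(β)}` for every `λ`; and the energy densities `h_N`
converge in distribution to the constant `-G'(β)`. -/
theorem orthogonal_model_energy_density_convergence
    (J : (N : ℕ) → Matrix (Fin N) (Fin N) ℝ)
    (hsymm : ∀ N, (J N).IsSymm) (horth : ∀ N, J N * (J N)ᵀ = 1)
    (β : ℝ) (h0 : 0 ≤ β) (h1 : β < 1)
    (G : ℝ → ℝ)
    (hmono : ∀ b : ℝ, 0 ≤ b → b < 1 → ∀ N, 1 ≤ N → Go J N b ≤ Go J (N + 1) b)
    (hlim : ∀ b : ℝ, 0 ≤ b → b < 1 →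
      Tendsto (fun N : ℕ => Go J N b) atTop (𝓝 (G b)))
    (hdiff : ∀ b ∈ Set.Ico (0 : ℝ) 1, DifferentiableAt ℝ G b) :
    (∀ (lam : ℝ) (N : ℕ), 1 ≤ N →
      gibbso J N β (fun σ => Real.exp (-lam * (Ho J N σ / N)))
        = Zo J N (β + lam / N) / Zo J N β) ∧
    (∀ lam : ℝ, 0 ≤ lam → ∀ N : ℕ, 1 ≤ N →
      ∃ βs : ℝ, β ≤ βs ∧ βs ≤ β + lam / N ∧
        Zo J N (β + lam / N) / Zo J N β = Real.exp (lam * deriv (Go J N) βs)) ∧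
    (∀ lam : ℝ,
      Tendsto (fun N : ℕ => gibbso J N β (fun σ => Real.exp (-lam * (Ho J N σ / N))))
        atTop (𝓝 (Real.exp (lam * deriv G β)))) ∧
    (∀ t : ℝ, t ≠ -deriv G β →
      Tendsto (fun N : ℕ =>
          gibbso J N β (fun σ => if Ho J N σ / N ≤ t then 1 else 0))
        atTop (𝓝 (if -deriv G β ≤ t then 1 else 0))) := by
  have p1 : ∀ (lam : ℝ) (N : ℕ), 1 ≤ N →
      gibbso J N β (fun σ => Real.exp (-lam * (Ho J N σ / N)))
        = Zo J N (β + lam / N) / Zo J N β := fun lam N hN => part1_eq J N β lam hN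
  have p3 : ∀ lam : ℝ,
      Tendsto (fun N : ℕ => gibbso J N β (fun σ => Real.exp (-lam * (Ho J N σ / N))))
        atTop (𝓝 (Real.exp (lam * deriv G β))) := by
    intro lam
    have hkey := key_limit J hsymm horth β h0 h1 G hlim hdiff lam
    have hexp := (Real.continuous_exp.tendsto _).comp hkey
    refine Tendsto.congr' ?_ hexp
    filter_upwards [eventually_ge_atTop 1] with N hN
    show Real.exp ((N:ℝ) * (Go J N (β + lam / N) - Go J N β)) = _
    rw [exp_NGo J N β lam hN, ← p1 lam N hN]
  refine ⟨p1, ?_, p3, ?_⟩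
  · -- part 2: mean value theorem
    intro lam hlam N hN
    have hNpos : (0:ℝ) < N := by exact_mod_cast Nat.pos_of_ne_zero (by omega)
    rcases eq_or_lt_of_le hlam with h | h
    · refine ⟨β, le_rfl, by rw [← h]; simp, ?_⟩
      rw [← h]
      simp [div_self (Zo_pos J N β).ne']
    · have hb : β < β + lam / N := by
        have : 0 < lam / N := div_pos h hNpos
        linarith
      obtain ⟨βs, hβs, heq⟩ := exists_deriv_eq_slope (Go J N) hb
        ((differentiable_Go J N).continuous.continuousOn)
        ((differentiable_Go J N).differentiableOn)
      refine ⟨βs, le_of_lt hβs.1, le_of_lt hβs.2, ?_⟩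
      rw [heq]
      have h2 : lam * ((Go J N (β + lam / N) - Go J N β) / (β + lam / N - β))
          = (N:ℝ) * (Go J N (β + lam / N) - Go J N β) := by
        rw [show β + lam / N - β = lam / N by ring]
        field_simp
      rw [h2, exp_NGo J N β lam hN]
  · -- part 4: convergence in distribution
    intro t ht
    set c := deriv G β with hc
    have ind_nonneg : ∀ (n : ℕ) (σ : Fin n → Bool),
        (0:ℝ) ≤ (if Ho J n σ / n ≤ t then (1:ℝ) else 0) := by
      intro n σ; split <;> norm_num
    have ind_le_one : ∀ (n : ℕ) (σ : Fin n → Bool),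
        (if Ho J n σ / n ≤ t then (1:ℝ) else 0) ≤ 1 := by
      intro n σ; split <;> norm_num
    by_cases hcase : -c ≤ t
    · have htc : -c < t := lt_of_le_of_ne hcase (Ne.symm ht)
      rw [if_pos hcase]
      rw [Metric.tendsto_atTop]
      intro ε hε
      set δ := t + c with hδ
      have hδpos : 0 < δ := by rw [hδ]; linarith
      set L := max 1 (Real.log (2 / ε) / δ + 1) with hLdef
      have hL1 : (1:ℝ) ≤ L := le_max_left _ _
      have hLpos : 0 < L := by linarith
      have hLδ : Real.log (2 / ε) < L * δ := by
        have hle : Real.log (2 / ε) / δ + 1 ≤ L := le_max_right _ _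
        have e1 : Real.log (2 / ε) = (Real.log (2 / ε) / δ) * δ := by field_simp
        nlinarith
      have hexpδ : Real.exp (-(L * δ)) < ε / 2 := by
        have h2ε : (0:ℝ) < 2 / ε := by positivity
        have h3 : -(L * δ) < -Real.log (2 / ε) := by linarith
        calc Real.exp (-(L * δ)) < Real.exp (-Real.log (2 / ε)) := Real.exp_lt_exp.2 h3
          _ = ε / 2 := by rw [Real.exp_neg, Real.exp_log h2ε, inv_div]
      have hv := p3 (-L)
      rw [Metric.tendsto_atTop] at hv
      obtain ⟨N0, hN0⟩ := hv (ε / 2 * Real.exp (L * t)) (by positivity)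
      refine ⟨max N0 1, fun n hn => ?_⟩
      have hnN0 : N0 ≤ n := le_trans (le_max_left _ _) hn
      have hn1 : 1 ≤ n := le_trans (le_max_right _ _) hn
      set u := gibbso J n β (fun σ => if Ho J n σ / n ≤ t then (1:ℝ) else 0) with hu
      have hu1 : u ≤ 1 := by
        have hm := gibbso_mono J n β (f := fun σ => if Ho J n σ / n ≤ t then (1:ℝ) else 0)
          (g := fun _ => 1) (ind_le_one n)
        rwa [gibbso_const] at hm
      have hu0 : 0 ≤ u := gibbso_nonneg J n β (ind_nonneg n)
      set v := gibbso J n β (fun σ => Real.exp (-(-L) * (Ho J n σ / n))) with hvdef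
      have hkey : 1 - u ≤ Real.exp (-L * t) * v := by
        have step1 : 1 - u = gibbso J n β
            (fun σ => 1 - (if Ho J n σ / n ≤ t then (1:ℝ) else 0)) := by
          rw [gibbso_one_sub]
        have step2 : gibbso J n β
            (fun σ => 1 - (if Ho J n σ / n ≤ t then (1:ℝ) else 0))
            ≤ gibbso J n β (fun σ => Real.exp (-L * t)
                * Real.exp (-(-L) * (Ho J n σ / n))) := by
          apply gibbso_mono
          intro σ
          by_cases hσ : Ho J n σ / n ≤ t
          · rw [if_pos hσ]
            simp only [sub_self]
            positivity
          · rw [if_neg hσ]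
            push_neg at hσ
            rw [← Real.exp_add]
            have harg : 0 ≤ -L * t + -(-L) * (Ho J n σ / n) := by
              have : t ≤ Ho J n σ / n := le_of_lt hσ
              nlinarith
            calc (1:ℝ) - 0 = 1 := by ring
              _ ≤ Real.exp (-L * t + -(-L) * (Ho J n σ / n)) := Real.one_le_exp harg
        rw [step1]
        calc gibbso J n β (fun σ => 1 - (if Ho J n σ / n ≤ t then (1:ℝ) else 0))
            ≤ gibbso J n β (fun σ => Real.exp (-L * t)
                * Real.exp (-(-L) * (Ho J n σ / n))) := step2
          _ = Real.exp (-L * t) * v := by rw [gibbso_smul, hvdef]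
      have hvb : v < Real.exp (-L * c) + ε / 2 * Real.exp (L * t) := by
        have := hN0 n hnN0
        rw [Real.dist_eq] at this
        have := (abs_lt.1 this).2
        linarith
      have hfinal : 1 - u < ε := by
        have hexppos : (0:ℝ) < Real.exp (-L * t) := Real.exp_pos _
        have hstep : Real.exp (-L * t) * v
            < Real.exp (-L * t) * (Real.exp (-L * c) + ε / 2 * Real.exp (L * t)) :=
          mul_lt_mul_of_pos_left hvb hexppos
        have he1 : Real.exp (-L * t) * Real.exp (-L * c) = Real.exp (-(L * δ)) := by
          rw [← Real.exp_add]; congr 1; rw [hδ]; ring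
        have he2 : Real.exp (-L * t) * (ε / 2 * Real.exp (L * t)) = ε / 2 := by
          rw [show Real.exp (-L * t) * (ε / 2 * Real.exp (L * t))
            = ε / 2 * (Real.exp (-L * t) * Real.exp (L * t)) by ring, ← Real.exp_add]
          simp
        nlinarith [hkey]
      rw [Real.dist_eq, abs_sub_comm, abs_of_nonneg (by linarith : (0:ℝ) ≤ 1 - u)]
      exact hfinal
    · have htc : t < -c := not_le.1 hcase
      rw [if_neg hcase]
      rw [Metric.tendsto_atTop]
      intro ε hε
      set δ := -c - t with hδ
      have hδpos : 0 < δ := by rw [hδ]; linarith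
      set L := max 1 (Real.log (2 / ε) / δ + 1) with hLdef
      have hL1 : (1:ℝ) ≤ L := le_max_left _ _
      have hLpos : 0 < L := by linarith
      have hLδ : Real.log (2 / ε) < L * δ := by
        have hle : Real.log (2 / ε) / δ + 1 ≤ L := le_max_right _ _
        have e1 : Real.log (2 / ε) = (Real.log (2 / ε) / δ) * δ := by field_simp
        nlinarith
      have hexpδ : Real.exp (-(L * δ)) < ε / 2 := by
        have h2ε : (0:ℝ) < 2 / ε := by positivity
        have h3 : -(L * δ) < -Real.log (2 / ε) := by linarith
        calc Real.exp (-(L * δ)) < Real.exp (-Real.log (2 / ε)) := Real.exp_lt_exp.2 h3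
          _ = ε / 2 := by rw [Real.exp_neg, Real.exp_log h2ε, inv_div]
      have hv := p3 L
      rw [Metric.tendsto_atTop] at hv
      obtain ⟨N0, hN0⟩ := hv (ε / 2 * Real.exp (-(L * t))) (by positivity)
      refine ⟨max N0 1, fun n hn => ?_⟩
      have hnN0 : N0 ≤ n := le_trans (le_max_left _ _) hn
      have hn1 : 1 ≤ n := le_trans (le_max_right _ _) hn
      set u := gibbso J n β (fun σ => if Ho J n σ / n ≤ t then (1:ℝ) else 0) with hu
      have hu0 : 0 ≤ u := gibbso_nonneg J n β (ind_nonneg n)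
      set v := gibbso J n β (fun σ => Real.exp (-L * (Ho J n σ / n))) with hvdef
      have hkey : u ≤ Real.exp (L * t) * v := by
        have step2 : gibbso J n β (fun σ => if Ho J n σ / n ≤ t then (1:ℝ) else 0)
            ≤ gibbso J n β (fun σ => Real.exp (L * t)
                * Real.exp (-L * (Ho J n σ / n))) := by
          apply gibbso_mono
          intro σ
          by_cases hσ : Ho J n σ / n ≤ t
          · rw [if_pos hσ, ← Real.exp_add]
            have harg : 0 ≤ L * t + -L * (Ho J n σ / n) := by nlinarith
            exact Real.one_le_exp harg
          · rw [if_neg hσ]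
            positivity
        rw [hu]
        calc gibbso J n β (fun σ => if Ho J n σ / n ≤ t then (1:ℝ) else 0)
            ≤ gibbso J n β (fun σ => Real.exp (L * t)
                * Real.exp (-L * (Ho J n σ / n))) := step2
          _ = Real.exp (L * t) * v := by rw [gibbso_smul, hvdef]
      have hvb : v < Real.exp (L * c) + ε / 2 * Real.exp (-(L * t)) := by
        have := hN0 n hnN0
        rw [Real.dist_eq] at this
        have := (abs_lt.1 this).2
        linarith
      have hfinal : u < ε := by
        have hexppos : (0:ℝ) < Real.exp (L * t) := Real.exp_pos _
        have hstep : Real.exp (L * t) * v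
            < Real.exp (L * t) * (Real.exp (L * c) + ε / 2 * Real.exp (-(L * t))) :=
          mul_lt_mul_of_pos_left hvb hexppos
        have he1 : Real.exp (L * t) * Real.exp (L * c) = Real.exp (-(L * δ)) := by
          rw [← Real.exp_add]; congr 1; rw [hδ]; ring
        have he2 : Real.exp (L * t) * (ε / 2 * Real.exp (-(L * t))) = ε / 2 := by
          rw [show Real.exp (L * t) * (ε / 2 * Real.exp (-(L * t)))
            = ε / 2 * (Real.exp (L * t) * Real.exp (-(L * t))) by ring, ← Real.exp_add]
          simp
        nlinarith [hkey]
      rw [Real.dist_eq, sub_zero, abs_of_nonneg hu0]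
      exact hfinal
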